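/- Let X ⊆ ℤ^d be a finite set of vectors such that the cone generated by X is not equal to the linear span of X. Then there exists a non-zero vector n ∈ ℤ^d such that (1) ⟨n, x⟩ ≥ 0 for all x ∈ X, and (2) letting X₀ = {x ∈ X : ⟨n, x⟩ = 0}, the cone generated by X₀ equals the linear span of X₀. -/

import Mathlib

open Matrix Finset

def cone {d : ℕ} (X : Set (Fin d → ℚ)) : Set (Fin d → ℚ) :=
  {y | ∃ (k : ℕ) (c : Fin k → ℚ) (v : Fin k → (Fin d → ℚ)),
    (∀ i, 0 ≤ c i) ∧ (∀ i, v i ∈ X) ∧ y = ∑ i, c i • v i}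

def coeVec {d : ℕ} (v : Fin d → ℤ) : Fin d → ℚ := fun i => (v i : ℚ)

variable {d : ℕ}

lemma zero_mem_cone (S : Set (Fin d → ℚ)) : (0 : Fin d → ℚ) ∈ cone S :=
  ⟨0, Fin.elim0, Fin.elim0, fun i => i.elim0, fun i => i.elim0, by simp⟩

lemma mem_cone_of_mem {S : Set (Fin d → ℚ)} {x : Fin d → ℚ} (hx : x ∈ S) : x ∈ cone S :=
  ⟨1, fun _ => 1, fun _ => x, fun _ => zero_le_one, fun _ => hx, by simp⟩

lemma cone_mono {S T : Set (Fin d → ℚ)} (h : S ⊆ T) : cone S ⊆ cone T := by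
  rintro y ⟨k, c, v, hc, hv, rfl⟩
  exact ⟨k, c, v, hc, fun i => h (hv i), rfl⟩

lemma add_mem_cone {S : Set (Fin d → ℚ)} {y z : Fin d → ℚ}
    (hy : y ∈ cone S) (hz : z ∈ cone S) : y + z ∈ cone S := by
  obtain ⟨k₁, c₁, v₁, hc₁, hv₁, rfl⟩ := hy
  obtain ⟨k₂, c₂, v₂, hc₂, hv₂, rfl⟩ := hz
  refine ⟨k₁ + k₂, Fin.append c₁ c₂, Fin.append v₁ v₂, ?_, ?_, ?_⟩
  · intro i
    refine Fin.addCases (fun j => ?_) (fun j => ?_) i <;>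
      simp [Fin.append_left, Fin.append_right] <;> [exact hc₁ j; exact hc₂ j]
  · intro i
    refine Fin.addCases (fun j => ?_) (fun j => ?_) i <;>
      simp [Fin.append_left, Fin.append_right] <;> [exact hv₁ j; exact hv₂ j]
  · rw [Fin.sum_univ_add]
    simp [Fin.append_left, Fin.append_right]

lemma smul_mem_cone {S : Set (Fin d → ℚ)} {t : ℚ} {y : Fin d → ℚ}
    (ht : 0 ≤ t) (hy : y ∈ cone S) : t • y ∈ cone S := by
  obtain ⟨k, c, v, hc, hv, rfl⟩ := hy
  refine ⟨k, fun i => t * c i, v, fun i => mul_nonneg ht (hc i), hv, ?_⟩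
  rw [Finset.smul_sum]
  simp [mul_smul]

lemma sum_mem_cone {S : Set (Fin d → ℚ)} {ι : Type*} (s : Finset ι) (f : ι → (Fin d → ℚ))
    (hf : ∀ i ∈ s, f i ∈ cone S) : ∑ i ∈ s, f i ∈ cone S :=
  Finset.sum_induction f (· ∈ cone S) (fun _ _ => add_mem_cone) (zero_mem_cone S) hf

lemma cone_subset_span (S : Set (Fin d → ℚ)) :
    cone S ⊆ (Submodule.span ℚ S : Set (Fin d → ℚ)) := by
  rintro y ⟨k, c, v, hc, hv, rfl⟩
  exact Submodule.sum_mem _ fun i _ =>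
    Submodule.smul_mem _ _ (Submodule.subset_span (hv i))

lemma cone_eq_span_of_neg (s : Finset (Fin d → ℚ)) (h : ∀ x ∈ s, -x ∈ cone (s : Set (Fin d → ℚ))) :
    cone (s : Set (Fin d → ℚ)) = (Submodule.span ℚ (s : Set (Fin d → ℚ)) : Set (Fin d → ℚ)) := by
  refine Set.Subset.antisymm (cone_subset_span _) ?_
  intro y hy
  obtain ⟨f, -, hf⟩ := Submodule.mem_span_finset.mp hy
  rw [← hf]
  refine sum_mem_cone s _ fun x hx => ?_
  rcases le_or_gt 0 (f x) with hfx | hfx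
  · exact smul_mem_cone hfx (mem_cone_of_mem (by exact_mod_cast hx))
  · have : f x • x = (-f x) • (-x) := by simp
    rw [this]
    exact smul_mem_cone (by linarith) (h x hx)

lemma mem_cone_empty {y : Fin d → ℚ} (hy : y ∈ cone (∅ : Set (Fin d → ℚ))) : y = 0 := by
  obtain ⟨k, c, v, hc, hv, rfl⟩ := hy
  rcases Nat.eq_zero_or_pos k with rfl | hk
  · simp
  · exact absurd (hv ⟨0, hk⟩) (Set.notMem_empty _)

lemma farkasAux : ∀ (k : ℕ) (X : Finset (Fin d → ℚ)), X.card ≤ k →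
    ∀ y : Fin d → ℚ, y ∉ cone (X : Set (Fin d → ℚ)) →
    ∃ n : Fin d → ℚ, (∀ x ∈ X, 0 ≤ n ⬝ᵥ x) ∧ n ⬝ᵥ y < 0 := by
  intro k
  induction k with
  | zero =>
    intro X hX y hy
    rw [Finset.card_eq_zero.mp (Nat.le_zero.mp hX)] at hy ⊢
    have hy0 : y ≠ 0 := fun h0 => hy (h0 ▸ zero_mem_cone _)
    refine ⟨-y, by simp, ?_⟩
    rw [neg_dotProduct, neg_neg_iff_pos]
    exact lt_of_le_of_ne (Finset.sum_nonneg fun i _ => mul_self_nonneg _)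
      (fun h0 => hy0 (dotProduct_self_eq_zero.mp h0.symm))
  | succ k ih =>
    intro X hX y hy
    rcases X.eq_empty_or_nonempty with rfl | ⟨a, ha⟩
    · exact ih ∅ (by simp) y hy
    set X' := X.erase a with hX'
    have hX'card : X'.card ≤ k := by
      have h1 : 0 < X.card := Finset.card_pos.mpr ⟨a, ha⟩
      rw [hX', Finset.card_erase_of_mem ha]
      omega
    have hy' : y ∉ cone (X' : Set (Fin d → ℚ)) := fun h =>
      hy (cone_mono (by exact_mod_cast Finset.erase_subset a X) h)
    obtain ⟨n, hn, hny⟩ := ih X' hX'card y hy'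
    rcases le_or_gt 0 (n ⬝ᵥ a) with hna | hna
    · refine ⟨n, fun x hx => ?_, hny⟩
      rcases eq_or_ne x a with rfl | hxa
      · exact hna
      · exact hn x (Finset.mem_erase.mpr ⟨hxa, hx⟩)
    · -- project along a
      set p : (Fin d → ℚ) → (Fin d → ℚ) := fun v => v - (n ⬝ᵥ v / n ⬝ᵥ a) • a with hp
      classical
      set X'' := X'.image p with hX''
      have hpy : p y ∉ cone (X'' : Set (Fin d → ℚ)) := by
        intro hmem
        obtain ⟨k', c, v, hc, hv, hsum⟩ := hmem
        have hv' : ∀ i, ∃ u, u ∈ X' ∧ p u = v i := by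
          intro i
          have := hv i
          rw [hX'', Finset.coe_image] at this
          obtain ⟨u, hu, hpu⟩ := this
          exact ⟨u, hu, hpu⟩
        choose u hu hpu using hv'
        apply hy
        set r : Fin k' → ℚ := fun i => n ⬝ᵥ u i / n ⬝ᵥ a with hr
        set e : ℚ := n ⬝ᵥ y / n ⬝ᵥ a with he
        have hsum' : y - e • a = (∑ i, c i • u i) - (∑ i, c i * r i) • a := by
          calc y - e • a = p y := rfl
            _ = ∑ i, c i • v i := hsum
            _ = ∑ i, c i • (u i - r i • a) := by
                refine Finset.sum_congr rfl fun i _ => ?_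
                rw [← hpu i]
            _ = (∑ i, c i • u i) - (∑ i, c i * r i) • a := by
                rw [Finset.sum_smul]
                rw [← Finset.sum_sub_distrib]
                refine Finset.sum_congr rfl fun i _ => ?_
                rw [smul_sub, mul_smul]
        have hy_eq : y = (∑ i, c i • u i) + (e - ∑ i, c i * r i) • a := by
          rw [sub_eq_iff_eq_add] at hsum'
          rw [hsum', sub_smul]
          abel
        have hμ : 0 ≤ e - ∑ i, c i * r i := by
          have he_pos : 0 < e := div_pos_of_neg_of_neg hny hna
          have hsum_nonpos : (∑ i, c i * r i) ≤ 0 := by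
            refine Finset.sum_nonpos fun i _ => ?_
            exact mul_nonpos_of_nonneg_of_nonpos (hc i)
              (div_nonpos_of_nonneg_of_nonpos (hn _ (hu i)) hna.le)
          linarith
        rw [hy_eq]
        refine add_mem_cone (sum_mem_cone _ _ fun i _ => ?_) (smul_mem_cone hμ ?_)
        · exact smul_mem_cone (hc i) (mem_cone_of_mem
            (by exact_mod_cast Finset.mem_of_mem_erase (hu i)))
        · exact mem_cone_of_mem (by exact_mod_cast ha)
      have hX''card : X''.card ≤ k := le_trans Finset.card_image_le hX'card
      obtain ⟨m, hm, hmy⟩ := ih X'' hX''card (p y) hpy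
      have key : ∀ w : Fin d → ℚ, (m - (m ⬝ᵥ a / n ⬝ᵥ a) • n) ⬝ᵥ w = m ⬝ᵥ p w := by
        intro w
        rw [hp]
        simp only [sub_dotProduct, smul_dotProduct, dotProduct_sub, dotProduct_smul,
          smul_eq_mul]
        ring
      refine ⟨m - (m ⬝ᵥ a / n ⬝ᵥ a) • n, fun x hx => ?_, ?_⟩
      · rw [key]
        rcases eq_or_ne x a with rfl | hxa
        · have : p x = 0 := by
            rw [hp]
            simp only
            rw [div_self hna.ne, one_smul, sub_self]
          rw [this, dotProduct_zero]
        · exact hm (p x) (Finset.mem_image_of_mem p (Finset.mem_erase.mpr ⟨hxa, hx⟩))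
      · rw [key]; exact hmy

lemma farkas (X : Finset (Fin d → ℚ)) (y : Fin d → ℚ) (hy : y ∉ cone (X : Set (Fin d → ℚ))) :
    ∃ n : Fin d → ℚ, (∀ x ∈ X, 0 ≤ n ⬝ᵥ x) ∧ n ⬝ᵥ y < 0 :=
  farkasAux X.card X le_rfl y hy

lemma int_scale (n : Fin d → ℚ) : ∃ (N : ℕ) (n' : Fin d → ℤ),
    0 < N ∧ coeVec n' = (N : ℚ) • n := by
  refine ⟨∏ i, (n i).den, fun i => (n i).num * ((∏ j, (n j).den) / (n i).den : ℕ), ?_, ?_⟩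
  · exact Finset.prod_pos fun i _ => (n i).pos
  · funext i
    have hd : (n i).den ∣ ∏ j, (n j).den := Finset.dvd_prod_of_mem _ (Finset.mem_univ i)
    show ((((n i).num * ((∏ j, (n j).den) / (n i).den : ℕ)) : ℤ) : ℚ) = _
    have hne : ((n i).den : ℚ) ≠ 0 := by exact_mod_cast (n i).den_nz
    rw [Int.cast_mul, Int.cast_natCast, Nat.cast_div hd hne, Pi.smul_apply, smul_eq_mul,
      mul_div_assoc', mul_comm ((n i).num : ℚ), mul_div_assoc, Rat.num_div_den]

lemma cast_dot (a x : Fin d → ℤ) : ((∑ i, a i * x i : ℤ) : ℚ) = coeVec a ⬝ᵥ coeVec x := by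
  push_cast
  simp [dotProduct, coeVec]

theorem stmt0 (d : ℕ) (X : Finset (Fin d → ℤ))
    (h : cone (coeVec '' (X : Set (Fin d → ℤ)))
        ≠ (Submodule.span ℚ (coeVec '' (X : Set (Fin d → ℤ))) : Set (Fin d → ℚ))) :
    ∃ n : Fin d → ℤ, n ≠ 0 ∧ (∀ x ∈ X, 0 ≤ ∑ i, n i * x i) ∧
      cone (coeVec '' {x : Fin d → ℤ | x ∈ X ∧ ∑ i, n i * x i = 0})
        = (Submodule.span ℚ (coeVec '' {x : Fin d → ℤ | x ∈ X ∧ ∑ i, n i * x i = 0}) :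
            Set (Fin d → ℚ)) := by
  classical
  obtain ⟨y₀, hy₀span, hy₀cone⟩ :=
    Set.exists_of_ssubset (ssubset_of_subset_of_ne (cone_subset_span _) h)
  have him : coeVec '' (X : Set (Fin d → ℤ))
      = ((X.image coeVec : Finset (Fin d → ℚ)) : Set (Fin d → ℚ)) :=
    (Finset.coe_image).symm
  rw [him] at hy₀cone
  obtain ⟨n₀, hn₀, hn₀y⟩ := farkas (X.image coeVec) y₀ hy₀cone
  have hn₀ne : n₀ ≠ 0 := by
    intro h0
    rw [h0, zero_dotProduct] at hn₀y
    exact lt_irrefl 0 hn₀y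
  set P : (Fin d → ℚ) → Prop := fun n => n ≠ 0 ∧ ∀ x ∈ X, 0 ≤ n ⬝ᵥ coeVec x with hPdef
  set pc : (Fin d → ℚ) → ℕ := fun n => (X.filter (fun x => 0 < n ⬝ᵥ coeVec x)).card with hpcdef
  set s : Finset ℕ := (Finset.range (X.card + 1)).filter (fun k => ∃ n, P n ∧ pc n = k)
    with hsdef
  have hP₀ : P n₀ := ⟨hn₀ne, fun x hx => hn₀ (coeVec x) (Finset.mem_image_of_mem _ hx)⟩
  have hsne : s.Nonempty := ⟨pc n₀, Finset.mem_filter.mpr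
    ⟨Finset.mem_range.mpr (Nat.lt_succ_of_le (Finset.card_filter_le _ _)), n₀, hP₀, rfl⟩⟩
  obtain ⟨n, hPn, hpcn⟩ := (Finset.mem_filter.mp (s.max'_mem hsne)).2
  set X₀ := X.filter (fun x => n ⬝ᵥ coeVec x = 0) with hX₀
  have hneg : ∀ z ∈ X₀.image coeVec,
      -z ∈ cone ((X₀.image coeVec : Finset (Fin d → ℚ)) : Set (Fin d → ℚ)) := by
    by_contra hcon
    push_neg at hcon
    obtain ⟨z₀, hz₀, hz₀c⟩ := hcon
    obtain ⟨x₀, hx₀, rfl⟩ := Finset.mem_image.mp hz₀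
    obtain ⟨m, hm, hmy⟩ := farkas (X₀.image coeVec) _ hz₀c
    have hmx₀ : 0 < m ⬝ᵥ coeVec x₀ := by
      rw [dotProduct_neg] at hmy
      linarith
    set t : ℚ := 1 + ∑ x ∈ X, max ((1 + |m ⬝ᵥ coeVec x|) / (n ⬝ᵥ coeVec x)) 0 with ht
    have ht1 : 1 ≤ t := by
      have h0 : 0 ≤ ∑ x ∈ X, max ((1 + |m ⬝ᵥ coeVec x|) / (n ⬝ᵥ coeVec x)) 0 :=
        Finset.sum_nonneg fun x _ => le_max_right _ _
      rw [ht]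
      linarith
    set n' : Fin d → ℚ := t • n + m with hn'
    have hdot' : ∀ x : Fin d → ℤ, n' ⬝ᵥ coeVec x = t * (n ⬝ᵥ coeVec x) + m ⬝ᵥ coeVec x := by
      intro x
      rw [hn', add_dotProduct, smul_dotProduct, smul_eq_mul]
    have hzero : ∀ x ∈ X, n ⬝ᵥ coeVec x = 0 → n' ⬝ᵥ coeVec x = m ⬝ᵥ coeVec x := by
      intro x hx hx0
      rw [hdot', hx0, mul_zero, zero_add]
    have hposd : ∀ x ∈ X, 0 < n ⬝ᵥ coeVec x → 0 < n' ⬝ᵥ coeVec x := by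
      intro x hx hpos
      rw [hdot']
      have hterm : (1 + |m ⬝ᵥ coeVec x|) / (n ⬝ᵥ coeVec x) ≤ t := by
        calc (1 + |m ⬝ᵥ coeVec x|) / (n ⬝ᵥ coeVec x)
            ≤ max ((1 + |m ⬝ᵥ coeVec x|) / (n ⬝ᵥ coeVec x)) 0 := le_max_left _ _
          _ ≤ ∑ x ∈ X, max ((1 + |m ⬝ᵥ coeVec x|) / (n ⬝ᵥ coeVec x)) 0 :=
              Finset.single_le_sum
                (f := fun z => max ((1 + |m ⬝ᵥ coeVec z|) / (n ⬝ᵥ coeVec z)) 0)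
                (fun z _ => le_max_right _ _) hx
          _ ≤ t := by rw [ht]; linarith
      have h2 : 1 + |m ⬝ᵥ coeVec x| ≤ t * (n ⬝ᵥ coeVec x) := by
        rw [div_le_iff₀ hpos] at hterm
        linarith [hterm]
      have h3 : -(m ⬝ᵥ coeVec x) ≤ |m ⬝ᵥ coeVec x| := neg_le_abs _
      linarith
    have hPn' : P n' := by
      constructor
      · intro h0
        have : n' ⬝ᵥ coeVec x₀ = 0 := by rw [h0, zero_dotProduct]
        rw [hzero x₀ (Finset.mem_filter.mp hx₀).1 (Finset.mem_filter.mp hx₀).2] at this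
        linarith
      · intro x hx
        rcases lt_or_eq_of_le (hPn.2 x hx) with hpos | heq
        · exact (hposd x hx hpos).le
        · rw [hzero x hx heq.symm]
          exact hm (coeVec x) (Finset.mem_image_of_mem _
            (Finset.mem_filter.mpr ⟨hx, heq.symm⟩))
    have hss : X.filter (fun x => 0 < n ⬝ᵥ coeVec x)
        ⊂ X.filter (fun x => 0 < n' ⬝ᵥ coeVec x) := by
      rw [Finset.ssubset_iff_of_subset]
      · refine ⟨x₀, ?_, ?_⟩
        · refine Finset.mem_filter.mpr ⟨(Finset.mem_filter.mp hx₀).1, ?_⟩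
          rw [hzero x₀ (Finset.mem_filter.mp hx₀).1 (Finset.mem_filter.mp hx₀).2]
          exact hmx₀
        · intro hmem
          have := (Finset.mem_filter.mp hmem).2
          have h0 := (Finset.mem_filter.mp hx₀).2
          rw [h0] at this
          exact lt_irrefl 0 this
      · intro x hx
        have := Finset.mem_filter.mp hx
        exact Finset.mem_filter.mpr ⟨this.1, hposd x this.1 this.2⟩
    have hle : pc n' ≤ s.max' hsne := Finset.le_max' s (pc n') (Finset.mem_filter.mpr
      ⟨Finset.mem_range.mpr (Nat.lt_succ_of_le (Finset.card_filter_le _ _)), n', hPn', rfl⟩)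
    have hlt : s.max' hsne < pc n' := by
      rw [← hpcn]
      exact Finset.card_lt_card hss
    omega
  have hcs := cone_eq_span_of_neg (X₀.image coeVec) hneg
  obtain ⟨N, nInt, hN, hcoe⟩ := int_scale n
  have hdotN : ∀ x : Fin d → ℤ, coeVec nInt ⬝ᵥ coeVec x = (N : ℚ) * (n ⬝ᵥ coeVec x) := by
    intro x
    rw [hcoe, smul_dotProduct, smul_eq_mul]
  have hNne : (N : ℚ) ≠ 0 := by exact_mod_cast hN.ne'
  refine ⟨nInt, ?_, ?_, ?_⟩
  · intro h0
    apply hPn.1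
    have : coeVec nInt = 0 := by
      rw [h0]; funext i; simp [coeVec]
    rw [hcoe] at this
    rcases smul_eq_zero.mp this with hc | hc
    · exact absurd hc hNne
    · exact hc
  · intro x hx
    have : (0 : ℚ) ≤ ((∑ i, nInt i * x i : ℤ) : ℚ) := by
      rw [cast_dot, hdotN]
      exact mul_nonneg (by positivity) (hPn.2 x hx)
    exact_mod_cast this
  · have hset : {x : Fin d → ℤ | x ∈ X ∧ ∑ i, nInt i * x i = 0} = (X₀ : Set (Fin d → ℤ)) := by
      ext x
      simp only [Set.mem_setOf_eq, hX₀, Finset.coe_filter, Set.mem_setOf_eq]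
      constructor
      · rintro ⟨hx, hx0⟩
        refine ⟨hx, ?_⟩
        have : ((∑ i, nInt i * x i : ℤ) : ℚ) = 0 := by exact_mod_cast hx0
        rw [cast_dot, hdotN] at this
        exact (mul_eq_zero.mp this).resolve_left hNne
      · rintro ⟨hx, hx0⟩
        refine ⟨hx, ?_⟩
        have : ((∑ i, nInt i * x i : ℤ) : ℚ) = 0 := by
          rw [cast_dot, hdotN, hx0, mul_zero]
        exact_mod_cast this
    rw [hset, ← Finset.coe_image]
    exact hcs
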